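/- Define c_α(v, φ) := −(Π_K(−C*v₂/√α), C*φ₂)_Q − (1/√α)(I v₁, I φ₁)_W on V = V₁ × V₂. Then for all v, w ∈ V, choosing φ = (−(v₁ − w₁), v₂ − w₂), one has c_α(v, φ) − c_α(w, φ) ≥ (1/√α) δ_α(v, w)². -/

import Mathlib

open RealInnerProductSpace

/-- Generalized coercivity of `c_α`: with
`c_α(x, φ) = −⟪Π_K(−C*x₂/√α), C*φ₂⟫ − (1/√α)⟪I x₁, I φ₁⟫` and the test function
`φ = (−(v₁ − w₁), v₂ − w₂)`, one has `c_α(v,φ) − c_α(w,φ) ≥ (1/√α) δ_α(v,w)²`. -/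
theorem stmt7 {V₁ V₂ Q W : Type*}
    [NormedAddCommGroup V₁] [InnerProductSpace ℝ V₁] [CompleteSpace V₁]
    [NormedAddCommGroup V₂] [InnerProductSpace ℝ V₂] [CompleteSpace V₂]
    [NormedAddCommGroup Q] [InnerProductSpace ℝ Q] [CompleteSpace Q]
    [NormedAddCommGroup W] [InnerProductSpace ℝ W] [CompleteSpace W]
    (K : Set Q) (hne : K.Nonempty) (hcl : IsClosed K) (hconv : Convex ℝ K)
    (proj : Q → Q) (hmem : ∀ q, proj q ∈ K)
    (hmono : ∀ q₁ q₂ : Q, ‖proj q₁ - proj q₂‖ ^ 2 ≤ ⟪proj q₁ - proj q₂, q₁ - q₂⟫)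
    (I : V₁ →L[ℝ] W) (Cstar : V₂ →L[ℝ] Q) (α : ℝ) (hα : 0 < α)
    (cα : (V₁ × V₂) → (V₁ × V₂) → ℝ)
    (hcα : ∀ x φ : V₁ × V₂, cα x φ =
      -⟪proj ((-(Real.sqrt α)⁻¹) • Cstar x.2), Cstar φ.2⟫
        - (Real.sqrt α)⁻¹ * ⟪I x.1, I φ.1⟫)
    (v w : V₁ × V₂) :
    (Real.sqrt α)⁻¹ * (α * ‖proj ((-(Real.sqrt α)⁻¹) • Cstar v.2)
          - proj ((-(Real.sqrt α)⁻¹) • Cstar w.2)‖ ^ 2 + ‖I (v.1 - w.1)‖ ^ 2)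
      ≤ cα v (-(v.1 - w.1), v.2 - w.2) - cα w (-(v.1 - w.1), v.2 - w.2) := by
  set s := Real.sqrt α with hs
  have hspos : 0 < s := Real.sqrt_pos.mpr hα
  have hss : s * s = α := Real.mul_self_sqrt hα.le
  set pv := proj ((-s⁻¹) • Cstar v.2) with hpv
  set pw := proj ((-s⁻¹) • Cstar w.2) with hpw
  have key := hmono ((-s⁻¹) • Cstar v.2) ((-s⁻¹) • Cstar w.2)
  rw [← smul_sub, real_inner_smul_right, ← map_sub] at key
  rw [hcα, hcα]
  simp only [← hpv, ← hpw]
  simp only [← hpv, ← hpw] at key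
  have h1 : ⟪I v.1, I (-(v.1 - w.1))⟫ = -⟪I v.1, I (v.1 - w.1)⟫ := by
    rw [map_neg, inner_neg_right]
  have h2 : ⟪I w.1, I (-(v.1 - w.1))⟫ = -⟪I w.1, I (v.1 - w.1)⟫ := by
    rw [map_neg, inner_neg_right]
  have h3 : ⟪I v.1, I (v.1 - w.1)⟫ - ⟪I w.1, I (v.1 - w.1)⟫ = ‖I (v.1 - w.1)‖ ^ 2 := by
    rw [← inner_sub_left, ← map_sub, real_inner_self_eq_norm_sq]
  have h4 : ⟪pv, Cstar (v.2 - w.2)⟫ - ⟪pw, Cstar (v.2 - w.2)⟫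
      = ⟪pv - pw, Cstar (v.2 - w.2)⟫ := (inner_sub_left _ _ _).symm
  have hnn : (0:ℝ) ≤ ‖pv - pw‖ ^ 2 := sq_nonneg _
  have hmul : s * ‖pv - pw‖ ^ 2 ≤ -⟪pv - pw, Cstar (v.2 - w.2)⟫ := by
    have := mul_le_mul_of_nonneg_left key hspos.le
    calc s * ‖pv - pw‖ ^ 2 ≤ s * (-s⁻¹ * ⟪pv - pw, Cstar (v.2 - w.2)⟫) := this
      _ = -⟪pv - pw, Cstar (v.2 - w.2)⟫ := by
          field_simp
  have hsa : s⁻¹ * α = s := by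
    field_simp [← hss]; rw [← hss]; ring
  have hfin : s⁻¹ * (α * ‖pv - pw‖ ^ 2 + ‖I (v.1 - w.1)‖ ^ 2)
      = s * ‖pv - pw‖ ^ 2 + s⁻¹ * ‖I (v.1 - w.1)‖ ^ 2 := by
    rw [mul_add, ← mul_assoc, hsa]
  have h5 : s⁻¹ * ⟪I v.1, I (v.1 - w.1)⟫ - s⁻¹ * ⟪I w.1, I (v.1 - w.1)⟫
      = s⁻¹ * ‖I (v.1 - w.1)‖ ^ 2 := by rw [← mul_sub, h3]
  rw [h1, h2]
  linarith [hmul, h4, hfin, h5]
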